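/- For every real u > 0 and every real ε ≥ 0, one has 0 ≤ Ψ(u) − exp(uε + ε²/2)·Ψ(u + ε) ≤ (ε/u)·Ψ(u). -/

import Mathlib

open MeasureTheory

open Set Filter

/-- The standard normal density `φ(z) = (2π)^{-1/2} exp(−z²/2)`. -/
noncomputable def phi (x : ℝ) : ℝ := (Real.sqrt (2 * Real.pi))⁻¹ * Real.exp (-x ^ 2 / 2)

lemma phi_eq (x : ℝ) : phi x = (Real.sqrt (2 * Real.pi))⁻¹ * Real.exp (-(1/2 : ℝ) * x ^ 2) := by
  unfold phi; ring_nf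

lemma phi_pos (x : ℝ) : 0 < phi x := by
  unfold phi
  have h : 0 < Real.sqrt (2 * Real.pi) := Real.sqrt_pos.mpr (by positivity)
  positivity

lemma phi_cont : Continuous phi := by
  unfold phi; fun_prop

lemma sqrt2pi_inv_pos : 0 < (Real.sqrt (2 * Real.pi))⁻¹ := by
  have : 0 < Real.sqrt (2 * Real.pi) := Real.sqrt_pos.mpr (by positivity)
  positivity

lemma integrable_phi : Integrable phi := by
  have h := (integrable_exp_neg_mul_sq (by norm_num : (0:ℝ) < 1/2)).const_mul
      ((Real.sqrt (2 * Real.pi))⁻¹)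
  apply h.congr
  filter_upwards with x
  rw [phi_eq]

lemma integrable_mul_phi : Integrable (fun x => x * phi x) := by
  have h := (integrable_mul_exp_neg_mul_sq (by norm_num : (0:ℝ) < 1/2)).const_mul
      ((Real.sqrt (2 * Real.pi))⁻¹)
  apply h.congr
  filter_upwards with x
  rw [phi_eq]; ring

lemma integrable_sq_phi : Integrable (fun x => x ^ 2 * phi x) := by
  have hb : Integrable (fun x : ℝ => (Real.sqrt (2 * Real.pi))⁻¹ * (4 * Real.exp (-(1/4 : ℝ) * x ^ 2))) :=
    ((integrable_exp_neg_mul_sq (by norm_num : (0:ℝ) < 1/4)).const_mul 4).const_mul _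
  apply hb.mono'
  · exact ((continuous_pow 2).mul phi_cont).aestronglyMeasurable
  · filter_upwards with x
    rw [Real.norm_eq_abs, abs_of_nonneg (mul_nonneg (by positivity) (phi_pos x).le), phi_eq]
    have h1 : x ^ 2 ≤ 4 * Real.exp ((1/4 : ℝ) * x ^ 2) := by
      have := Real.add_one_le_exp ((1/4 : ℝ) * x ^ 2)
      nlinarith [Real.exp_pos ((1/4 : ℝ) * x ^ 2)]
    have hx : x ^ 2 * Real.exp (-(1/2:ℝ) * x ^ 2) ≤ 4 * Real.exp (-(1/4:ℝ) * x ^ 2) := by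
      calc x ^ 2 * Real.exp (-(1/2:ℝ) * x ^ 2)
          ≤ 4 * Real.exp ((1/4:ℝ) * x ^ 2) * Real.exp (-(1/2:ℝ) * x ^ 2) :=
            mul_le_mul_of_nonneg_right h1 (Real.exp_pos _).le
        _ = 4 * Real.exp (-(1/4:ℝ) * x ^ 2) := by
            rw [mul_assoc, ← Real.exp_add]; ring_nf
    calc x ^ 2 * ((Real.sqrt (2 * Real.pi))⁻¹ * Real.exp (-(1/2:ℝ) * x ^ 2))
        = (Real.sqrt (2 * Real.pi))⁻¹ * (x ^ 2 * Real.exp (-(1/2:ℝ) * x ^ 2)) := by ring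
      _ ≤ (Real.sqrt (2 * Real.pi))⁻¹ * (4 * Real.exp (-(1/4:ℝ) * x ^ 2)) :=
          mul_le_mul_of_nonneg_left hx sqrt2pi_inv_pos.le

open Topology in
lemma hasDerivAt_phi (x : ℝ) : HasDerivAt phi (-x * phi x) x := by
  have h1 : HasDerivAt (fun x : ℝ => -x ^ 2 / 2) (-x) x := by
    have := ((hasDerivAt_pow 2 x).neg).div_const 2
    refine this.congr_deriv ?_
    norm_num
    ring
  have h2 := (h1.exp).const_mul ((Real.sqrt (2 * Real.pi))⁻¹)
  have he : phi = fun x => (Real.sqrt (2 * Real.pi))⁻¹ * Real.exp (-x ^ 2 / 2) := rfl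
  rw [he]
  exact h2.congr_deriv (by ring)

open Topology in
lemma phi_tendsto_zero : Tendsto phi atTop (𝓝 0) := by
  have h0 : Tendsto (fun x : ℝ => -x ^ 2 / 2) atTop atBot := by
    apply Tendsto.congr (f₁ := fun x : ℝ => -(x ^ 2 / 2)) (fun x => by ring)
    exact tendsto_neg_atTop_atBot.comp
      ((tendsto_pow_atTop (by norm_num : 2 ≠ 0)).atTop_div_const (by norm_num))
  have h1 : Tendsto (fun x : ℝ => Real.exp (-x ^ 2 / 2)) atTop (𝓝 0) :=
    Real.tendsto_exp_atBot.comp h0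
  have h := h1.const_mul ((Real.sqrt (2 * Real.pi))⁻¹)
  rw [mul_zero] at h
  exact h

open Topology in
lemma mul_phi_tendsto_zero : Tendsto (fun x => x * phi x) atTop (𝓝 0) := by
  have ho := rpow_mul_exp_neg_mul_sq_isLittleO_exp_neg (by norm_num : (0:ℝ) < 1/2) 1
  have h2 : Tendsto (fun x : ℝ => Real.exp (-(1/2 : ℝ) * x)) atTop (𝓝 0) := by
    apply Real.tendsto_exp_atBot.comp
    apply Tendsto.congr (f₁ := fun x : ℝ => -((1/2 : ℝ) * x)) (fun x => by ring)
    exact tendsto_neg_atTop_atBot.comp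
      (tendsto_id.const_mul_atTop (by norm_num : (0:ℝ) < 1/2))
  have h3 := ho.isBigO.trans_tendsto h2
  have h4 := h3.const_mul ((Real.sqrt (2 * Real.pi))⁻¹)
  rw [mul_zero] at h4
  apply h4.congr'
  filter_upwards [eventually_gt_atTop (0:ℝ)] with x hx
  rw [phi_eq, Real.rpow_one]
  ring

lemma int_mul_phi (u : ℝ) : ∫ t in Set.Ioi u, t * phi t = phi u := by
  have h := integral_Ioi_of_hasDerivAt_of_tendsto (a := u) (f := fun t => -phi t)
    (f' := fun t => t * phi t) (m := 0)
    phi_cont.neg.continuousWithinAt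
    (fun x _ => by
      have := (hasDerivAt_phi x).neg
      exact this.congr_deriv (by ring))
    integrable_mul_phi.integrableOn
    (by simpa using phi_tendsto_zero.neg)
  simpa using h

lemma integrable_sq_sub_one_phi : Integrable (fun t : ℝ => (t ^ 2 - 1) * phi t) := by
  apply (integrable_sq_phi.sub integrable_phi).congr
  filter_upwards with t
  simp only [Pi.sub_apply]
  ring

lemma int_sq_sub_one_phi (u : ℝ) : ∫ t in Set.Ioi u, (t ^ 2 - 1) * phi t = u * phi u := by
  have h := integral_Ioi_of_hasDerivAt_of_tendsto (a := u) (f := fun t => -(t * phi t))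
    (f' := fun t => (t ^ 2 - 1) * phi t) (m := 0)
    (continuous_id.mul phi_cont).neg.continuousWithinAt
    (fun x _ => by
      have := ((hasDerivAt_id x).mul (hasDerivAt_phi x)).neg
      exact this.congr_deriv (by simp only [id_eq]; ring))
    integrable_sq_sub_one_phi.integrableOn
    (by simpa using mul_phi_tendsto_zero.neg)
  simpa using h

lemma mills (u : ℝ) : u * phi u ≤ (1 + u ^ 2) * ∫ t in Set.Ioi u, phi t := by
  have h0 : 0 ≤ ∫ t in Set.Ioi u, (t - u) ^ 2 * phi t :=
    setIntegral_nonneg measurableSet_Ioi (fun t _ => mul_nonneg (sq_nonneg _) (phi_pos t).le)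
  have i1 : IntegrableOn (fun t : ℝ => (t ^ 2 - 1) * phi t) (Set.Ioi u) :=
    integrable_sq_sub_one_phi.integrableOn
  have i2 : IntegrableOn (fun t : ℝ => (1 + u ^ 2) * phi t) (Set.Ioi u) :=
    (integrable_phi.const_mul _).integrableOn
  have i3 : IntegrableOn (fun t : ℝ => (2 * u) * (t * phi t)) (Set.Ioi u) :=
    (integrable_mul_phi.const_mul _).integrableOn
  have i12 : IntegrableOn (fun t : ℝ => (t ^ 2 - 1) * phi t + (1 + u ^ 2) * phi t) (Set.Ioi u) :=
    i1.add i2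
  have he : ∫ t in Set.Ioi u, (t - u) ^ 2 * phi t
      = ∫ t in Set.Ioi u, ((t ^ 2 - 1) * phi t + (1 + u ^ 2) * phi t) - (2 * u) * (t * phi t) := by
    apply integral_congr_ae
    filter_upwards with t
    ring
  rw [he, integral_sub i12 i3, integral_add i1 i2, integral_const_mul,
    integral_const_mul, int_sq_sub_one_phi, int_mul_phi] at h0
  linarith

lemma shift_eq (u ε : ℝ) :
    Real.exp (u * ε + ε ^ 2 / 2) * ∫ z in Set.Ioi (u + ε), phi z
      = ∫ t in Set.Ioi u, phi t * Real.exp (-((t - u) * ε)) := by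
  have h1 : (∫ z in Set.Ioi (u + ε), phi z) = ∫ t in Set.Ioi u, phi (t + ε) := by
    rw [← integral_indicator measurableSet_Ioi, ← integral_indicator measurableSet_Ioi,
      ← integral_add_right_eq_self (fun z => Set.indicator (Set.Ioi (u + ε)) phi z) ε]
    congr 1
    funext t
    by_cases ht : t ∈ Set.Ioi u
    · rw [Set.indicator_of_mem ht, Set.indicator_of_mem (by simp only [Set.mem_Ioi] at ht ⊢; linarith)]
    · rw [Set.indicator_of_notMem ht, Set.indicator_of_notMem
        (by simp only [Set.mem_Ioi] at ht ⊢; linarith)]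
  rw [h1, ← integral_const_mul]
  apply integral_congr_ae
  filter_upwards with t
  calc Real.exp (u * ε + ε ^ 2 / 2) * phi (t + ε)
      = (Real.sqrt (2 * Real.pi))⁻¹ * (Real.exp (u * ε + ε ^ 2 / 2) * Real.exp (-(t + ε) ^ 2 / 2)) := by
        unfold phi; ring
    _ = (Real.sqrt (2 * Real.pi))⁻¹ * Real.exp ((u * ε + ε ^ 2 / 2) + -(t + ε) ^ 2 / 2) := by
        rw [← Real.exp_add]
    _ = (Real.sqrt (2 * Real.pi))⁻¹ * Real.exp (-t ^ 2 / 2 + -((t - u) * ε)) := by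
        congr 1; ring
    _ = phi t * Real.exp (-((t - u) * ε)) := by unfold phi; rw [Real.exp_add]; ring

/-- The standard Gaussian survival function `Ψ(x) = ∫_x^∞ φ(z) dz`. -/
noncomputable def Psi (x : ℝ) : ℝ := ∫ z in Set.Ioi x, phi z

/-- `0 ≤ Ψ(u) − exp(uε + ε²/2)·Ψ(u + ε) ≤ (ε/u)·Ψ(u)` for `u > 0`, `ε ≥ 0`. -/
theorem stmt2 (u ε : ℝ) (hu : 0 < u) (hε : 0 ≤ ε) :
    0 ≤ Psi u - Real.exp (u * ε + ε ^ 2 / 2) * Psi (u + ε) ∧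
      Psi u - Real.exp (u * ε + ε ^ 2 / 2) * Psi (u + ε) ≤ (ε / u) * Psi u := by
  have hE : Real.exp (u * ε + ε ^ 2 / 2) * Psi (u + ε)
      = ∫ t in Set.Ioi u, phi t * Real.exp (-((t - u) * ε)) := shift_eq u ε
  have hg : IntegrableOn (fun t => phi t * Real.exp (-((t - u) * ε))) (Set.Ioi u) := by
    apply Integrable.mono' integrable_phi.integrableOn
    · exact (phi_cont.mul (by fun_prop)).aestronglyMeasurable.restrict
    · rw [ae_restrict_iff' measurableSet_Ioi]
      filter_upwards with t ht
      rw [Set.mem_Ioi] at ht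
      have h1 : Real.exp (-((t - u) * ε)) ≤ 1 := by
        rw [Real.exp_le_one_iff]
        nlinarith
      rw [Real.norm_eq_abs, abs_of_nonneg (mul_nonneg (phi_pos t).le (Real.exp_pos _).le)]
      nlinarith [phi_pos t]
  have key : Psi u - Real.exp (u * ε + ε ^ 2 / 2) * Psi (u + ε)
      = ∫ t in Set.Ioi u, phi t * (1 - Real.exp (-((t - u) * ε))) := by
    rw [hE, Psi, ← integral_sub integrable_phi.integrableOn hg]
    apply integral_congr_ae
    filter_upwards with t
    ring
  have hint1 : IntegrableOn (fun t => phi t * (1 - Real.exp (-((t - u) * ε)))) (Set.Ioi u) := by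
    apply (integrable_phi.integrableOn.sub hg).congr
    filter_upwards with t
    simp only [Pi.sub_apply]
    ring
  have hint2 : IntegrableOn (fun t => phi t * ((t - u) * ε)) (Set.Ioi u) := by
    apply (((integrable_mul_phi.const_mul ε).sub (integrable_phi.const_mul (ε * u))).integrableOn).congr
    filter_upwards with t
    simp only [Pi.sub_apply]
    ring
  constructor
  · rw [key]
    apply setIntegral_nonneg measurableSet_Ioi
    intro t ht
    rw [Set.mem_Ioi] at ht
    have h1 : Real.exp (-((t - u) * ε)) ≤ 1 := by
      rw [Real.exp_le_one_iff]
      nlinarith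
    exact mul_nonneg (phi_pos t).le (by linarith)
  · rw [key]
    have hle : (∫ t in Set.Ioi u, phi t * (1 - Real.exp (-((t - u) * ε))))
        ≤ ∫ t in Set.Ioi u, phi t * ((t - u) * ε) := by
      apply setIntegral_mono_on hint1 hint2 measurableSet_Ioi
      intro t ht
      rw [Set.mem_Ioi] at ht
      have h1 : 1 - Real.exp (-((t - u) * ε)) ≤ (t - u) * ε := by
        have := Real.add_one_le_exp (-((t - u) * ε))
        linarith
      exact mul_le_mul_of_nonneg_left h1 (phi_pos t).le
    have hval : (∫ t in Set.Ioi u, phi t * ((t - u) * ε)) = ε * (phi u - u * Psi u) := by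
      have he : (∫ t in Set.Ioi u, phi t * ((t - u) * ε))
          = ∫ t in Set.Ioi u, (ε * (t * phi t) - (ε * u) * phi t) := by
        apply integral_congr_ae
        filter_upwards with t
        ring
      rw [he, integral_sub ((integrable_mul_phi.const_mul ε).integrableOn)
          ((integrable_phi.const_mul (ε * u)).integrableOn), integral_const_mul,
        integral_const_mul, int_mul_phi]
      rw [Psi]
      ring
    have hm : u * phi u ≤ (1 + u ^ 2) * Psi u := mills u
    have h5 : phi u - u * Psi u ≤ Psi u / u := by
      rw [le_div_iff₀ hu]
      nlinarith
    calc (∫ t in Set.Ioi u, phi t * (1 - Real.exp (-((t - u) * ε))))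
        ≤ ∫ t in Set.Ioi u, phi t * ((t - u) * ε) := hle
      _ = ε * (phi u - u * Psi u) := hval
      _ ≤ ε * (Psi u / u) := mul_le_mul_of_nonneg_left h5 hε
      _ = (ε / u) * Psi u := by ring
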